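/- arXiv:1108.0460 — 2 statements merged into one kernel-verified Lean document; each statement's English description precedes it below -/
import Mathlib

section
/- Fix α ∈ [0,1) and a constant C > 0. Suppose k, l ∈ ℤ^n satisfy, for every coordinate j = 1,…,n, the two inequalities ⟨k⟩^{α/(1−α)}(k_j − C) < ⟨l⟩^{α/(1−α)}(l_j + C) and ⟨k⟩^{α/(1−α)}(k_j + C) > ⟨l⟩^{α/(1−α)}(l_j − C). Then there exist constants c₁, c₂ > 0 depending only on n, α, C such that c₁⟨l⟩ ≤ ⟨k⟩ ≤ c₂⟨l⟩. -/
open Real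

/-- Japanese bracket `⟨k⟩ = (1+|k|²)^{1/2}` of a lattice point `k ∈ ℤⁿ`. -/
noncomputable def jbracket {n : ℕ} (k : Fin n → ℤ) : ℝ :=
  Real.sqrt (1 + ∑ i, ((k i : ℝ)) ^ 2)

lemma jb_sq {n : ℕ} (k : Fin n → ℤ) : jbracket k ^ 2 = 1 + ∑ i, ((k i : ℝ)) ^ 2 := by
  have h : (0:ℝ) ≤ 1 + ∑ i, ((k i : ℝ)) ^ 2 := by positivity
  simpa [jbracket] using Real.sq_sqrt h

lemma jb_one_le {n : ℕ} (k : Fin n → ℤ) : 1 ≤ jbracket k := by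
  have h0 : (0:ℝ) ≤ ∑ i, ((k i : ℝ)) ^ 2 := by positivity
  calc (1:ℝ) = Real.sqrt 1 := by simp
  _ ≤ _ := Real.sqrt_le_sqrt (by linarith)

set_option maxHeartbeats 1600000 in
lemma key (n : ℕ) (s C : ℝ) (hs : 0 ≤ s) (hC : 0 < C) (k l : Fin n → ℤ)
    (h1 : ∀ j, jbracket k ^ s * ((k j : ℝ) - C) < jbracket l ^ s * ((l j : ℝ) + C))
    (h2 : ∀ j, jbracket k ^ s * ((k j : ℝ) + C) > jbracket l ^ s * ((l j : ℝ) - C)) :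
    jbracket k ≤ Real.sqrt (2 * (3 + 4 * n * C ^ 2)) * jbracket l := by
  set A := jbracket k with hAdef
  set B := jbracket l with hBdef
  have hA : 1 ≤ A := jb_one_le k
  have hB : 1 ≤ B := jb_one_le l
  set X := A ^ s with hXdef
  set Y := B ^ s with hYdef
  have hX : 1 ≤ X := Real.one_le_rpow hA hs
  have hY : 1 ≤ Y := Real.one_le_rpow hB hs
  have hn : (0:ℝ) ≤ n := Nat.cast_nonneg n
  set c := Real.sqrt (2 * (3 + 4 * n * C ^ 2)) with hcdef
  have hcsq : c ^ 2 = 2 * (3 + 4 * n * C ^ 2) := Real.sq_sqrt (by positivity)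
  have hc1 : 1 ≤ c := by
    nlinarith [Real.sqrt_nonneg (2 * (3 + 4 * (n:ℝ) * C ^ 2)), sq_nonneg C]
  rcases le_or_gt A B with hAB | hAB
  · calc A ≤ B := hAB
    _ ≤ c * B := le_mul_of_one_le_left (by linarith) hc1
  · -- B < A, hence Y ≤ X
    have hYX : Y ≤ X := Real.rpow_le_rpow (by linarith) hAB.le hs
    have habs : ∀ j, |X * (k j : ℝ) - Y * (l j : ℝ)| ≤ C * (X + Y) := by
      intro j
      have e1 := h1 j
      have e2 := h2 j
      rw [abs_le]
      constructor <;> nlinarith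
    have hsq : ∀ j, (X * (k j : ℝ)) ^ 2
        ≤ 2 * (Y * (l j : ℝ)) ^ 2 + 2 * (C * (X + Y)) ^ 2 := by
      intro j
      obtain ⟨hlo, hhi⟩ := abs_le.mp (habs j)
      nlinarith [sq_nonneg (Y * (l j : ℝ) - (X * (k j : ℝ) - Y * (l j : ℝ))),
        mul_nonneg (by linarith : (0:ℝ) ≤ C * (X + Y) - (X * (k j : ℝ) - Y * (l j : ℝ)))
          (by linarith : (0:ℝ) ≤ (X * (k j : ℝ) - Y * (l j : ℝ)) + C * (X + Y))]
    have hsum : X ^ 2 * (∑ i, ((k i : ℝ)) ^ 2)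
        ≤ 2 * Y ^ 2 * (∑ i, ((l i : ℝ)) ^ 2) + 2 * n * (C * (X + Y)) ^ 2 := by
      have hle := Finset.sum_le_sum (fun j (_ : j ∈ Finset.univ) => hsq j)
      simp only [Finset.sum_add_distrib, Finset.sum_const, Finset.card_univ,
        Fintype.card_fin, nsmul_eq_mul] at hle
      calc X ^ 2 * (∑ i, ((k i : ℝ)) ^ 2) = ∑ j, (X * (k j : ℝ)) ^ 2 := by
            rw [Finset.mul_sum]; exact Finset.sum_congr rfl (fun j _ => by ring)
      _ ≤ (∑ j, 2 * (Y * (l j : ℝ)) ^ 2) + n * (2 * (C * (X + Y)) ^ 2) := hle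
      _ = 2 * Y ^ 2 * (∑ i, ((l i : ℝ)) ^ 2) + 2 * n * (C * (X + Y)) ^ 2 := by
            have e : ∑ j, 2 * (Y * (l j : ℝ)) ^ 2 = 2 * Y ^ 2 * (∑ i, ((l i : ℝ)) ^ 2) := by
              rw [Finset.mul_sum]; exact Finset.sum_congr rfl (fun j _ => by ring)
            rw [e]; ring
    have hmain : X ^ 2 * (A ^ 2 - 1)
        ≤ 2 * Y ^ 2 * (B ^ 2 - 1) + 2 * n * (C * (X + Y)) ^ 2 := by
      have hk := jb_sq k
      have hl := jb_sq l
      rw [← hAdef] at hk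
      rw [← hBdef] at hl
      have ek : A ^ 2 - 1 = ∑ i, ((k i : ℝ)) ^ 2 := by linarith
      have el : B ^ 2 - 1 = ∑ i, ((l i : ℝ)) ^ 2 := by linarith
      rw [ek, el]; exact hsum
    have hK : X ^ 2 * A ^ 2
        ≤ (1 + 4 * n * C ^ 2) * X ^ 2 + (2 + 4 * n * C ^ 2) * (Y ^ 2 * B ^ 2) := by
      nlinarith [mul_nonneg (mul_nonneg hn (sq_nonneg C)) (sq_nonneg (X - Y)),
        mul_nonneg (mul_nonneg (mul_nonneg hn (sq_nonneg C)) (sq_nonneg Y))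
          (by nlinarith : (0:ℝ) ≤ B ^ 2 - 1),
        sq_nonneg Y]
    rcases le_or_gt (A ^ 2) (2 * (1 + 4 * n * C ^ 2)) with hcase | hcase
    · have h1' : A ≤ Real.sqrt (2 * (1 + 4 * n * C ^ 2)) := by
        rw [show A = Real.sqrt (A ^ 2) from (Real.sqrt_sq (by linarith)).symm]
        exact Real.sqrt_le_sqrt hcase
      have h2' : Real.sqrt (2 * (1 + 4 * n * C ^ 2)) ≤ c := by
        apply Real.sqrt_le_sqrt; nlinarith [sq_nonneg C]
      calc A ≤ c := le_trans h1' h2'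
      _ ≤ c * B := le_mul_of_one_le_right (by linarith) hB
    · have hXpos : (0:ℝ) < X ^ 2 := by positivity
      have step : X ^ 2 * A ^ 2 ≤ 2 * (2 + 4 * n * C ^ 2) * (Y ^ 2 * B ^ 2) := by
        have hh : (1 + 4 * n * C ^ 2) * X ^ 2 ≤ X ^ 2 * A ^ 2 / 2 := by
          nlinarith [mul_nonneg (sq_nonneg X)
            (by linarith : (0:ℝ) ≤ A ^ 2 - 2 * (1 + 4 * n * C ^ 2))]
        linarith
      have hY2X2 : Y ^ 2 ≤ X ^ 2 := by nlinarith
      have step2 : X ^ 2 * A ^ 2 ≤ X ^ 2 * (c * B) ^ 2 := by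
        have e : X ^ 2 * (c * B) ^ 2 = c ^ 2 * (X ^ 2 * B ^ 2) := by ring
        rw [e, hcsq]
        have hb2 : (0:ℝ) ≤ B ^ 2 := sq_nonneg B
        calc X ^ 2 * A ^ 2 ≤ 2 * (2 + 4 * n * C ^ 2) * (Y ^ 2 * B ^ 2) := step
        _ ≤ 2 * (2 + 4 * n * C ^ 2) * (X ^ 2 * B ^ 2) := by
            apply mul_le_mul_of_nonneg_left _ (by positivity)
            exact mul_le_mul_of_nonneg_right hY2X2 hb2
        _ ≤ 2 * (3 + 4 * n * C ^ 2) * (X ^ 2 * B ^ 2) := by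
            apply mul_le_mul_of_nonneg_right _ (by positivity)
            linarith
      have hAsq : A ^ 2 ≤ (c * B) ^ 2 := (mul_le_mul_iff_of_pos_left hXpos).mp step2
      calc A = Real.sqrt (A ^ 2) := (Real.sqrt_sq (by linarith)).symm
      _ ≤ Real.sqrt ((c * B) ^ 2) := Real.sqrt_le_sqrt hAsq
      _ = c * B := Real.sqrt_sq (by positivity)

/-- If the supports of the α-decomposition symbols `η_k^α` and `η_l^α` overlap
(expressed by the coordinatewise inequalities), then `⟨k⟩ ∼ ⟨l⟩` with constants
depending only on `n`, `α`, `C`. -/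
theorem overlap_comparable (n : ℕ) (α : ℝ) (hα0 : 0 ≤ α) (hα1 : α < 1)
    (C : ℝ) (hC : 0 < C) :
    ∃ c₁ c₂ : ℝ, 0 < c₁ ∧ 0 < c₂ ∧
      ∀ k l : Fin n → ℤ,
        (∀ j, jbracket k ^ (α / (1 - α)) * ((k j : ℝ) - C)
            < jbracket l ^ (α / (1 - α)) * ((l j : ℝ) + C)) →
        (∀ j, jbracket k ^ (α / (1 - α)) * ((k j : ℝ) + C)
            > jbracket l ^ (α / (1 - α)) * ((l j : ℝ) - C)) →
        c₁ * jbracket l ≤ jbracket k ∧ jbracket k ≤ c₂ * jbracket l := by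
  have hs : 0 ≤ α / (1 - α) := div_nonneg hα0 (by linarith)
  set c := Real.sqrt (2 * (3 + 4 * n * C ^ 2)) with hcdef
  have hcpos : 0 < c := Real.sqrt_pos.mpr (by positivity)
  refine ⟨c⁻¹, c, by positivity, hcpos, fun k l h1 h2 => ?_⟩
  constructor
  · have h := key n (α / (1 - α)) C hs hC l k (fun j => h2 j) (fun j => h1 j)
    rw [inv_mul_le_iff₀ hcpos]
    exact h
  · exact key n (α / (1 - α)) C hs hC k l h1 h2
end

section
/- Fix α ∈ [0,1) and a constant C > 0. Then there exists N = N(n, α, C) such that for every k ∈ ℤ^n, the set Λ(k) = { l ∈ ℤ^n : for all j, ⟨k⟩^{α/(1−α)}(k_j − C) < ⟨l⟩^{α/(1−α)}(l_j + C) and ⟨k⟩^{α/(1−α)}(k_j + C) > ⟨l⟩^{α/(1−α)}(l_j − C) } has cardinality at most N. -/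
open Real

lemma jb_pos {n : ℕ} (k : Fin n → ℤ) : 0 < jbracket k :=
  lt_of_lt_of_le one_pos (jb_one_le k)

lemma jb_coord_le {n : ℕ} (k : Fin n → ℤ) (j : Fin n) : |(k j : ℝ)| ≤ jbracket k := by
  rw [jbracket, ← Real.sqrt_sq_eq_abs]
  apply Real.sqrt_le_sqrt
  have : ((k j : ℝ))^2 ≤ ∑ i, ((k i : ℝ))^2 :=
    Finset.single_le_sum (f := fun i => ((k i:ℝ))^2) (fun i _ => sq_nonneg _) (Finset.mem_univ j)
  linarith

lemma jb_le_sum {n : ℕ} (k : Fin n → ℤ) : jbracket k ≤ 1 + ∑ j, |(k j : ℝ)| := by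
  rw [jbracket]
  have h0 : (0:ℝ) ≤ ∑ j, |(k j : ℝ)| := Finset.sum_nonneg fun i _ => abs_nonneg _
  have hsq : ∑ i, ((k i : ℝ))^2 ≤ (∑ j, |(k j : ℝ)|)^2 := by
    calc ∑ i, ((k i : ℝ))^2 = ∑ i, |(k i : ℝ)| * |(k i : ℝ)| := by
          refine Finset.sum_congr rfl fun i _ => ?_
          rw [← abs_mul, abs_of_nonneg (mul_self_nonneg _), sq]
      _ ≤ ∑ i, |(k i : ℝ)| * (∑ j, |(k j : ℝ)|) := by
          refine Finset.sum_le_sum fun i _ => ?_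
          refine mul_le_mul_of_nonneg_left ?_ (abs_nonneg _)
          exact Finset.single_le_sum (f := fun j => |(k j : ℝ)|) (fun i _ => abs_nonneg _)
            (Finset.mem_univ i)
      _ = (∑ j, |(k j : ℝ)|)^2 := by rw [← Finset.sum_mul, sq]
  have : Real.sqrt (1 + ∑ i, ((k i : ℝ))^2) ≤ Real.sqrt ((1 + ∑ j, |(k j : ℝ)|)^2) := by
    apply Real.sqrt_le_sqrt; nlinarith
  rwa [Real.sqrt_sq (by linarith)] at this

lemma jb_comp {n : ℕ} (β C : ℝ) (hβ : 0 ≤ β) (hC : 0 < C) (k l : Fin n → ℤ)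
    (h : ∀ j, |jbracket l ^ β * (l j : ℝ) - jbracket k ^ β * (k j : ℝ)|
        ≤ C * (jbracket k ^ β + jbracket l ^ β)) :
    jbracket l ≤ (2*(1+n*C) + 2*n*(1+C)) * jbracket k := by
  set K := jbracket k with hKdef
  set L := jbracket l with hLdef
  have hK : 1 ≤ K := jb_one_le k
  have hL : 1 ≤ L := jb_one_le l
  have hKb : (0:ℝ) < K ^ β := Real.rpow_pos_of_pos (by linarith) β
  have hLb : (0:ℝ) < L ^ β := Real.rpow_pos_of_pos (by linarith) β
  have hM0 : (0:ℝ) ≤ 2*(1+n*C) + 2*n*(1+C) := by positivity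
  rcases le_or_gt L (2*(1+(n:ℝ)*C)) with hcase | hcase
  · calc L ≤ 2*(1+(n:ℝ)*C) := hcase
      _ ≤ (2*(1+n*C) + 2*n*(1+C)) * 1 := by
          rw [mul_one]
          have h2n : (0:ℝ) ≤ 2*(n:ℝ)*(1+C) := by positivity
          linarith
      _ ≤ (2*(1+n*C) + 2*n*(1+C)) * K := by
          exact mul_le_mul_of_nonneg_left hK hM0
  · -- main case
    have hn : n ≠ 0 := by
      rintro rfl
      have : L = 1 := by
        rw [hLdef, jbracket]; simp
      rw [this] at hcase
      exact absurd hcase (by norm_num)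
    have hn1 : (1:ℝ) ≤ n := by
      have := Nat.one_le_iff_ne_zero.2 hn
      exact_mod_cast this
    -- coordinate bound
    have h2 : ∀ j, L ^ β * |(l j : ℝ)| ≤ K ^ (β+1) + C * (K ^ β + L ^ β) := by
      intro j
      have e1 : |L ^ β * (l j : ℝ)| = L ^ β * |(l j : ℝ)| := by
        rw [abs_mul, abs_of_pos hLb]
      have e2 : |K ^ β * (k j : ℝ)| ≤ K ^ (β+1) := by
        rw [abs_mul, abs_of_pos hKb, Real.rpow_add_one (by linarith : K ≠ 0)]
        exact mul_le_mul_of_nonneg_left (jb_coord_le k j) (le_of_lt hKb)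
      calc L ^ β * |(l j : ℝ)| = |L ^ β * (l j : ℝ)| := e1.symm
        _ ≤ |K ^ β * (k j : ℝ)| + |L ^ β * (l j : ℝ) - K ^ β * (k j : ℝ)| := by
            have := abs_sub_abs_le_abs_sub (L ^ β * (l j : ℝ)) (K ^ β * (k j : ℝ))
            linarith [abs_nonneg (L ^ β * (l j : ℝ) - K ^ β * (k j : ℝ))]
        _ ≤ K ^ (β+1) + C * (K ^ β + L ^ β) := add_le_add e2 (h j)
    have hKbb : K ^ β ≤ K ^ (β+1) := Real.rpow_le_rpow_of_exponent_le hK (by linarith)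
    have h3 : L ^ (β+1) ≤ (1+n*C) * L ^ β + (n*(1+C)) * K ^ (β+1) := by
      have : L ^ (β+1) = L ^ β * L := Real.rpow_add_one (by linarith) β
      rw [this]
      calc L ^ β * L ≤ L ^ β * (1 + ∑ j, |(l j : ℝ)|) :=
            mul_le_mul_of_nonneg_left (jb_le_sum l) (le_of_lt hLb)
        _ = L ^ β + ∑ j, L ^ β * |(l j : ℝ)| := by rw [mul_add, mul_one, Finset.mul_sum]
        _ ≤ L ^ β + ∑ _j : Fin n, (K ^ (β+1) + C * (K ^ β + L ^ β)) := by
            exact add_le_add_right (Finset.sum_le_sum fun j _ => h2 j) _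
        _ = L ^ β + n * (K ^ (β+1) + C * (K ^ β + L ^ β)) := by
            rw [Finset.sum_const, Finset.card_univ, Fintype.card_fin, nsmul_eq_mul]
        _ ≤ (1+n*C) * L ^ β + (n*(1+C)) * K ^ (β+1) := by
            have : (n:ℝ) * (C * K ^ β) ≤ (n:ℝ) * (C * K ^ (β+1)) := by
              apply mul_le_mul_of_nonneg_left _ (by linarith)
              exact mul_le_mul_of_nonneg_left hKbb (le_of_lt hC)
            nlinarith [hLb.le, hKb.le]
    have h4 : L ^ (β+1) ≤ (2*n*(1+C)) * K ^ (β+1) := by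
      have hLL : L ^ (β+1) = L ^ β * L := Real.rpow_add_one (by linarith) β
      have : (1+n*C) * L ^ β ≤ (L/2) * L ^ β := by
        apply mul_le_mul_of_nonneg_right _ hLb.le
        linarith
      rw [hLL] at h3 ⊢
      nlinarith
    have hc1 : (1:ℝ) ≤ 2*n*(1+C) := by nlinarith
    have h5 : L ^ (β+1) ≤ ((2*n*(1+C)) * K) ^ (β+1) := by
      rw [Real.mul_rpow (by linarith) (by linarith)]
      calc L ^ (β+1) ≤ (2*n*(1+C)) * K ^ (β+1) := h4
        _ ≤ (2*n*(1+C)) ^ (β+1) * K ^ (β+1) := by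
            apply mul_le_mul_of_nonneg_right _ (Real.rpow_nonneg (by linarith) _)
            calc (2*(n:ℝ)*(1+C)) = (2*n*(1+C)) ^ (1:ℝ) := (Real.rpow_one _).symm
              _ ≤ (2*n*(1+C)) ^ (β+1) := Real.rpow_le_rpow_of_exponent_le hc1 (by linarith)
    have h6 : L ≤ (2*n*(1+C)) * K :=
      (Real.rpow_le_rpow_iff (by linarith) (by positivity) (by linarith)).1 h5
    calc L ≤ (2*n*(1+C)) * K := h6
      _ ≤ (2*(1+n*C) + 2*n*(1+C)) * K := by nlinarith

lemma jb_sep {n : ℕ} (β : ℝ) (hβ : 0 ≤ β) (l l' : Fin n → ℤ) (hne : l ≠ l') :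
    (min (jbracket l) (jbracket l') ^ β)^2
      ≤ ∑ j, (jbracket l ^ β * (l j : ℝ) - jbracket l' ^ β * (l' j : ℝ))^2 := by
  set a := jbracket l with hadef
  set b := jbracket l' with hbdef
  have ha : 1 ≤ a := jb_one_le l
  have hb : 1 ≤ b := jb_one_le l'
  set x : Fin n → ℝ := fun j => (l j : ℝ) with hxdef
  set y : Fin n → ℝ := fun j => (l' j : ℝ) with hydef
  set m := min a b with hmdef
  have hm1 : 1 ≤ m := le_min ha hb
  have hmb : (0:ℝ) < m ^ β := Real.rpow_pos_of_pos (by linarith) β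
  set P := ∑ j, x j * (x j - y j) with hPdef
  set Q := ∑ j, y j * (y j - x j) with hQdef
  set D := ∑ j, (x j - y j)^2 with hDdef
  set T := ∑ j, (a ^ β * x j - b ^ β * y j) * (x j - y j) with hTdef
  set S := ∑ j, (a ^ β * x j - b ^ β * y j)^2 with hSdef
  have hPQ : P + Q = D := by
    rw [hPdef, hQdef, hDdef, ← Finset.sum_add_distrib]
    exact Finset.sum_congr rfl fun j _ => by ring
  have hD1 : 1 ≤ D := by
    have : ∃ j, l j ≠ l' j := by
      by_contra hcon
      push_neg at hcon
      exact hne (funext hcon)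
    obtain ⟨j, hj⟩ := this
    have hd : (1:ℝ) ≤ (x j - y j)^2 := by
      have h1 : l j - l' j ≠ 0 := sub_ne_zero.2 hj
      have h2 : (1:ℤ) ≤ (l j - l' j)^2 := by
        have h4 := Int.one_le_abs h1
        nlinarith [sq_abs (l j - l' j), abs_nonneg (l j - l' j)]
      have h3 : ((1:ℤ):ℝ) ≤ (((l j - l' j)^2 : ℤ) : ℝ) := Int.cast_le.2 h2
      push_cast at h3
      convert h3 using 2
    calc (1:ℝ) ≤ (x j - y j)^2 := hd
      _ ≤ D := Finset.single_le_sum (f := fun j => (x j - y j)^2)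
          (fun i _ => sq_nonneg _) (Finset.mem_univ j)
  have hTexp : T = a ^ β * P + b ^ β * Q := by
    rw [hTdef, hPdef, hQdef, Finset.mul_sum, Finset.mul_sum, ← Finset.sum_add_distrib]
    exact Finset.sum_congr rfl fun j _ => by ring
  have hT : m ^ β * D ≤ T := by
    rw [hTexp]
    rcases lt_or_ge P 0 with hP | hP
    · -- P < 0 : then a ≤ b, m = a
      have hx2 : ∑ j, x j ^ 2 < ∑ j, x j * y j := by
        have : P = ∑ j, x j ^ 2 - ∑ j, x j * y j := by
          rw [hPdef, ← Finset.sum_sub_distrib]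
          exact Finset.sum_congr rfl fun j _ => by ring
        linarith [this ▸ hP]
      have hx2n : (0:ℝ) ≤ ∑ j, x j ^ 2 := Finset.sum_nonneg fun j _ => sq_nonneg _
      have hy2n : (0:ℝ) ≤ ∑ j, y j ^ 2 := Finset.sum_nonneg fun j _ => sq_nonneg _
      have hCS : (∑ j, x j * y j)^2 ≤ (∑ j, x j ^ 2) * ∑ j, y j ^ 2 :=
        Finset.sum_mul_sq_le_sq_mul_sq Finset.univ x y
      have hxy : ∑ j, x j ^ 2 < ∑ j, y j ^ 2 := by nlinarith
      have hab : a ≤ b := by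
        rw [hadef, hbdef, jbracket, jbracket]
        exact Real.sqrt_le_sqrt (by simpa [hxdef, hydef] using by linarith)
      have habβ : a ^ β ≤ b ^ β := Real.rpow_le_rpow (by linarith) hab hβ
      have hma : m = a := min_eq_left hab
      have hQ0 : 0 ≤ Q := by linarith
      have : a ^ β * Q ≤ b ^ β * Q := mul_le_mul_of_nonneg_right habβ hQ0
      calc m ^ β * D = a ^ β * P + a ^ β * Q := by rw [hma, ← hPQ]; ring
        _ ≤ a ^ β * P + b ^ β * Q := by linarith
    · rcases lt_or_ge Q 0 with hQ | hQ
      · -- Q < 0 : then b ≤ a, m = b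
        have hy2 : ∑ j, y j ^ 2 < ∑ j, y j * x j := by
          have : Q = ∑ j, y j ^ 2 - ∑ j, y j * x j := by
            rw [hQdef, ← Finset.sum_sub_distrib]
            exact Finset.sum_congr rfl fun j _ => by ring
          linarith [this ▸ hQ]
        have hx2n : (0:ℝ) ≤ ∑ j, x j ^ 2 := Finset.sum_nonneg fun j _ => sq_nonneg _
        have hy2n : (0:ℝ) ≤ ∑ j, y j ^ 2 := Finset.sum_nonneg fun j _ => sq_nonneg _
        have hCS : (∑ j, y j * x j)^2 ≤ (∑ j, y j ^ 2) * ∑ j, x j ^ 2 :=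
          Finset.sum_mul_sq_le_sq_mul_sq Finset.univ y x
        have hxy : ∑ j, y j ^ 2 < ∑ j, x j ^ 2 := by nlinarith
        have hab : b ≤ a := by
          rw [hadef, hbdef, jbracket, jbracket]
          exact Real.sqrt_le_sqrt (by simpa [hxdef, hydef] using by linarith)
        have habβ : b ^ β ≤ a ^ β := Real.rpow_le_rpow (by linarith) hab hβ
        have hma : m = b := min_eq_right hab
        have hP0 : 0 ≤ P := hP
        have : b ^ β * P ≤ a ^ β * P := mul_le_mul_of_nonneg_right habβ hP0
        calc m ^ β * D = b ^ β * P + b ^ β * Q := by rw [hma, ← hPQ]; ring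
          _ ≤ a ^ β * P + b ^ β * Q := by linarith
      · -- both nonneg
        have h1 : m ^ β ≤ a ^ β := Real.rpow_le_rpow (by linarith) (min_le_left a b) hβ
        have h2 : m ^ β ≤ b ^ β := Real.rpow_le_rpow (by linarith) (min_le_right a b) hβ
        have e1 : m ^ β * P ≤ a ^ β * P := mul_le_mul_of_nonneg_right h1 hP
        have e2 : m ^ β * Q ≤ b ^ β * Q := mul_le_mul_of_nonneg_right h2 hQ
        calc m ^ β * D = m ^ β * P + m ^ β * Q := by rw [← hPQ]; ring
          _ ≤ a ^ β * P + b ^ β * Q := by linarith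
  have hCS2 : T^2 ≤ S * D :=
    Finset.sum_mul_sq_le_sq_mul_sq Finset.univ (fun j => a ^ β * x j - b ^ β * y j)
      (fun j => x j - y j)
  have hT0 : 0 ≤ T := le_trans (by nlinarith) hT
  have hD0 : (0:ℝ) ≤ D := by linarith
  have hT2 : (m ^ β * D)^2 ≤ T^2 := pow_le_pow_left₀ (mul_nonneg hmb.le hD0) hT 2
  have hS0 : 0 ≤ S := Finset.sum_nonneg fun j _ => sq_nonneg _
  nlinarith [hT2, hCS2, hD1, mul_nonneg (mul_nonneg (sq_nonneg (m ^ β)) hD0)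
    (by linarith : (0:ℝ) ≤ D - 1)]

set_option maxHeartbeats 2000000 in
/-- Uniform finite-overlap property of the α-covering: the set of indices `l`
whose symbol support can intersect that of `k` has cardinality bounded by a
constant depending only on `n`, `α`, `C`. -/
theorem overlap_card_bounded (n : ℕ) (α : ℝ) (hα0 : 0 ≤ α) (hα1 : α < 1)
    (C : ℝ) (hC : 0 < C) :
    ∃ N : ℕ, ∀ k : Fin n → ℤ,
      let Λ : Set (Fin n → ℤ) :=
        {l | ∀ j, jbracket k ^ (α / (1 - α)) * ((k j : ℝ) - C)
                < jbracket l ^ (α / (1 - α)) * ((l j : ℝ) + C)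
              ∧ jbracket k ^ (α / (1 - α)) * ((k j : ℝ) + C)
                > jbracket l ^ (α / (1 - α)) * ((l j : ℝ) - C)}
      Λ.Finite ∧ Λ.ncard ≤ N := by
  set β := α / (1 - α) with hβdef
  have hβ : 0 ≤ β := div_nonneg hα0 (by linarith)
  set M : ℝ := 2*(1+n*C) + 2*n*(1+C) with hMdef
  have hnC : (0:ℝ) ≤ (n:ℝ)*C := by positivity
  have hnC' : (0:ℝ) ≤ (n:ℝ)*(1+C) := by positivity
  have hM1 : (1:ℝ) ≤ M := by rw [hMdef]; linarith
  have hMpos : (0:ℝ) < M := by linarith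
  have hMβ : (0:ℝ) < M ^ β := Real.rpow_pos_of_pos hMpos β
  set L0 : ℝ := C * (1 + M ^ β) * M ^ β * Real.sqrt n with hL0def
  have hL00 : 0 ≤ L0 := by positivity
  refine ⟨((2 * (⌈L0⌉ + 1) + 1).toNat) ^ n, ?_⟩
  intro k Λ
  -- extract the abs bound from membership
  have habs : ∀ l ∈ Λ, ∀ j, |jbracket l ^ β * (l j : ℝ) - jbracket k ^ β * (k j : ℝ)|
      ≤ C * (jbracket k ^ β + jbracket l ^ β) := by
    intro l hl j
    have hl' : ∀ j, jbracket k ^ β * ((k j : ℝ) - C) < jbracket l ^ β * ((l j : ℝ) + C)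
        ∧ jbracket k ^ β * ((k j : ℝ) + C) > jbracket l ^ β * ((l j : ℝ) - C) := hl
    obtain ⟨h1, h2⟩ := hl' j
    rw [abs_le]
    constructor <;> nlinarith [h1, h2]
  by_cases hn : n = 0
  · subst hn
    have hsub : Λ ⊆ {fun _ => (0:ℤ)} := by
      intro l _
      have : l = fun _ => (0:ℤ) := funext fun j => j.elim0
      simp [this]
    have hfin : Λ.Finite := (Set.finite_singleton _).subset hsub
    refine ⟨hfin, ?_⟩
    calc Λ.ncard ≤ ({fun _ => (0:ℤ)} : Set (Fin 0 → ℤ)).ncard :=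
          Set.ncard_le_ncard hsub (Set.finite_singleton _)
      _ = 1 := Set.ncard_singleton _
      _ ≤ _ := by rw [pow_zero]
  · -- main case : n ≥ 1
    have hn1 : (1:ℝ) ≤ (n:ℝ) := by exact_mod_cast Nat.one_le_iff_ne_zero.2 hn
    have hsn : (0:ℝ) < Real.sqrt n := Real.sqrt_pos.2 (by linarith)
    set K := jbracket k with hKdef
    have hK : 1 ≤ K := jb_one_le k
    have hK0 : (0:ℝ) < K := by linarith
    have hKβ : (0:ℝ) < K ^ β := Real.rpow_pos_of_pos hK0 β
    set s : ℝ := (K / M) ^ β / Real.sqrt n with hsdef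
    have hKM : (0:ℝ) < K / M := div_pos hK0 hMpos
    have hs : 0 < s := div_pos (Real.rpow_pos_of_pos hKM β) hsn
    -- comparability
    have hcomp : ∀ l ∈ Λ, jbracket l ≤ M * K := fun l hl => jb_comp β C hβ hC k l (habs l hl)
    have hcomp' : ∀ l ∈ Λ, K ≤ M * jbracket l := by
      intro l hl
      refine jb_comp β C hβ hC l k fun j => ?_
      rw [abs_sub_comm, add_comm (jbracket l ^ β)]
      exact habs l hl j
    -- separation
    have hsep : ∀ l ∈ Λ, ∀ l' ∈ Λ, l ≠ l' →
        ∃ j, s ≤ |jbracket l ^ β * (l j : ℝ) - jbracket l' ^ β * (l' j : ℝ)| := by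
      intro l hl l' hl' hne
      by_contra hcon
      push_neg at hcon
      have hmin : K / M ≤ min (jbracket l) (jbracket l') := by
        refine le_min ?_ ?_
        · rw [div_le_iff₀ hMpos, mul_comm]; exact hcomp' l hl
        · rw [div_le_iff₀ hMpos, mul_comm]; exact hcomp' l' hl'
      have hminβ : (K / M) ^ β ≤ min (jbracket l) (jbracket l') ^ β :=
        Real.rpow_le_rpow hKM.le hmin hβ
      have h1 : ((K / M) ^ β)^2 ≤ (min (jbracket l) (jbracket l') ^ β)^2 :=
        pow_le_pow_left₀ (Real.rpow_nonneg hKM.le β) hminβ 2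
      have h2 := jb_sep β hβ l l' hne
      have h3 : ∑ j, (jbracket l ^ β * (l j : ℝ) - jbracket l' ^ β * (l' j : ℝ))^2
          < ∑ _j : Fin n, s^2 := by
        have : Nonempty (Fin n) := ⟨⟨0, Nat.pos_of_ne_zero hn⟩⟩
        refine Finset.sum_lt_sum_of_nonempty Finset.univ_nonempty fun j _ => ?_
        have := hcon j
        nlinarith [abs_nonneg (jbracket l ^ β * (l j : ℝ) - jbracket l' ^ β * (l' j : ℝ)),
          sq_abs (jbracket l ^ β * (l j : ℝ) - jbracket l' ^ β * (l' j : ℝ))]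
      have h4 : ∑ _j : Fin n, s^2 = ((K / M) ^ β)^2 := by
        rw [Finset.sum_const, Finset.card_univ, Fintype.card_fin, nsmul_eq_mul, hsdef]
        rw [div_pow, Real.sq_sqrt (by linarith : (0:ℝ) ≤ (n:ℝ))]
        field_simp
      nlinarith [h1, h2, h3, h4]
    -- the grid map
    set φ : (Fin n → ℤ) → (Fin n → ℤ) := fun l j => ⌊(jbracket l ^ β * (l j : ℝ)) / s⌋
      with hφdef
    have hinj : Set.InjOn φ Λ := by
      intro l hl l' hl' heq
      by_contra hne
      obtain ⟨j, hj⟩ := hsep l hl l' hl' hne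
      have heqj : ⌊(jbracket l ^ β * (l j : ℝ)) / s⌋ = ⌊(jbracket l' ^ β * (l' j : ℝ)) / s⌋ :=
        congrFun heq j
      set u := (jbracket l ^ β * (l j : ℝ)) / s with hudef
      set v := (jbracket l' ^ β * (l' j : ℝ)) / s with hvdef
      have h1 : |u - v| < 1 := by
        have hu1 := Int.floor_le u
        have hu2 := Int.lt_floor_add_one u
        have hv1 := Int.floor_le v
        have hv2 := Int.lt_floor_add_one v
        rw [heqj] at hu1 hu2
        rw [abs_lt]
        constructor <;> linarith
      have h2 : |jbracket l ^ β * (l j : ℝ) - jbracket l' ^ β * (l' j : ℝ)| < s := by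
        have : u - v = (jbracket l ^ β * (l j : ℝ) - jbracket l' ^ β * (l' j : ℝ)) / s := by
          rw [hudef, hvdef]
          exact div_sub_div_same _ _ _
        rw [this, abs_div, abs_of_pos hs, div_lt_one hs] at h1
        exact h1
      linarith
    -- range bound
    have hrange : ∀ l ∈ Λ, ∀ j, |jbracket l ^ β * (l j : ℝ) - K ^ β * (k j : ℝ)|
        ≤ C * (1 + M ^ β) * K ^ β := by
      intro l hl j
      have h1 := habs l hl j
      have h2 : jbracket l ^ β ≤ M ^ β * K ^ β := by
        rw [← Real.mul_rpow hMpos.le hK0.le]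
        exact Real.rpow_le_rpow (jb_pos l).le (hcomp l hl) hβ
      calc |jbracket l ^ β * (l j : ℝ) - K ^ β * (k j : ℝ)|
          ≤ C * (K ^ β + jbracket l ^ β) := h1
        _ ≤ C * (1 + M ^ β) * K ^ β := by
            have h3 : C * jbracket l ^ β ≤ C * (M ^ β * K ^ β) :=
              mul_le_mul_of_nonneg_left h2 hC.le
            nlinarith [h3]
    set lo : Fin n → ℤ := fun j => ⌊(K ^ β * (k j : ℝ)) / s⌋ - (⌈L0⌉ + 1) with hlodef
    set hi : Fin n → ℤ := fun j => ⌊(K ^ β * (k j : ℝ)) / s⌋ + (⌈L0⌉ + 1) with hhidef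
    have hKs : C * (1 + M ^ β) * K ^ β / s = L0 := by
      rw [hsdef, Real.div_rpow hK0.le hMpos.le, hL0def]
      field_simp
    have himg : ∀ l ∈ Λ, φ l ∈ Finset.Icc lo hi := by
      intro l hl
      rw [Finset.mem_Icc]
      have huv : ∀ j, |jbracket l ^ β * (l j : ℝ) / s - K ^ β * (k j : ℝ) / s| ≤ L0 := by
        intro j
        calc |jbracket l ^ β * (l j : ℝ) / s - K ^ β * (k j : ℝ) / s|
            = |jbracket l ^ β * (l j : ℝ) - K ^ β * (k j : ℝ)| / s := by
              rw [div_sub_div_same, abs_div, abs_of_pos hs]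
          _ ≤ (C * (1 + M ^ β) * K ^ β) / s :=
              (div_le_div_iff_of_pos_right hs).2 (hrange l hl j)
          _ = L0 := hKs
      constructor <;> (intro j)
      · -- lower bound
        show lo j ≤ ⌊jbracket l ^ β * (l j : ℝ) / s⌋
        set u := jbracket l ^ β * (l j : ℝ) / s with hu
        set v := K ^ β * (k j : ℝ) / s with hv
        have h5 : (⌊v⌋:ℝ) ≤ v := Int.floor_le v
        have h6 : v - L0 ≤ u := by have := abs_le.1 (huv j); linarith
        have h7 : u < ⌊u⌋ + 1 := Int.lt_floor_add_one u
        have h8 : L0 ≤ ⌈L0⌉ := Int.le_ceil L0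
        have hz : (⌊v⌋ - ⌈L0⌉ : ℤ) < ⌊u⌋ + 1 := by
          have : ((⌊v⌋ - ⌈L0⌉ : ℤ) : ℝ) < ((⌊u⌋ + 1 : ℤ) : ℝ) := by push_cast; linarith
          exact_mod_cast this
        show (⌊v⌋ - (⌈L0⌉ + 1) : ℤ) ≤ ⌊u⌋
        omega
      · -- upper bound
        show ⌊jbracket l ^ β * (l j : ℝ) / s⌋ ≤ hi j
        set u := jbracket l ^ β * (l j : ℝ) / s with hu
        set v := K ^ β * (k j : ℝ) / s with hv
        have h1 : (⌊u⌋:ℝ) ≤ u := Int.floor_le u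
        have h2 : u ≤ v + L0 := by have := abs_le.1 (huv j); linarith
        have h3 : v < ⌊v⌋ + 1 := Int.lt_floor_add_one v
        have h4 : L0 ≤ ⌈L0⌉ := Int.le_ceil L0
        have hz : (⌊u⌋ : ℤ) < ⌊v⌋ + ⌈L0⌉ + 1 + 1 := by
          have : ((⌊u⌋ : ℤ) : ℝ) < ((⌊v⌋ + ⌈L0⌉ + 1 + 1 : ℤ) : ℝ) := by push_cast; linarith
          exact_mod_cast this
        show (⌊u⌋ : ℤ) ≤ ⌊v⌋ + (⌈L0⌉ + 1)
        omega
    have himg' : φ '' Λ ⊆ ↑(Finset.Icc lo hi) := by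
      rintro _ ⟨l, hl, rfl⟩
      exact himg l hl
    have hfin : Λ.Finite := Set.Finite.of_finite_image
      (Set.Finite.subset (Finset.Icc lo hi).finite_toSet himg') hinj
    refine ⟨hfin, ?_⟩
    have hcard : (Finset.Icc lo hi).card = ((2 * (⌈L0⌉ + 1) + 1).toNat) ^ n := by
      rw [Pi.card_Icc]
      have hjj : ∀ j, (Finset.Icc (lo j) (hi j)).card = (2 * (⌈L0⌉ + 1) + 1).toNat := by
        intro j
        rw [Int.card_Icc]
        congr 1
        rw [hlodef, hhidef]
        ring
      rw [Finset.prod_congr rfl fun j _ => hjj j, Finset.prod_const, Finset.card_univ,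
        Fintype.card_fin]
    calc Λ.ncard = (φ '' Λ).ncard := (Set.ncard_image_of_injOn hinj).symm
      _ ≤ (↑(Finset.Icc lo hi) : Set (Fin n → ℤ)).ncard :=
          Set.ncard_le_ncard himg' (Finset.finite_toSet _)
      _ = (Finset.Icc lo hi).card := Set.ncard_coe_finset _
      _ ≤ _ := le_of_eq hcard
end
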